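/- Let [Π_n(G)] be a set of representatives of the conjugacy classes of n-slices of the finite group G. For each S̄ ∈ [Π_n(G)], the vector w_{S̄} ∈ ∏_{T̄ ∈ [Π_n(G)]} ℚ with T̄-coordinate m(T̄,S̄)/[N_G(S̄):S_0] has all entries in ℤ, and the family {w_{S̄} : S̄ ∈ [Π_n(G)]} is a ℤ-basis of the full product group ∏_{T̄ ∈ [Π_n(G)]} ℤ. -/

import Mathlib

variable {G : Type*}

/-- The conjugate slice `ᵍS̄ = (gS₀g⁻¹, …, gSₙg⁻¹)`. -/
def sliceConj [Group G] {n : ℕ} (g : G) (S : Fin (n + 1) → Subgroup G) :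
    Fin (n + 1) → Subgroup G :=
  fun i => (S i).map (MulAut.conj g).toMonoidHom

/-- The mark `m(K̄,S̄) = |{gS₀ ∈ G/S₀ : g⁻¹Kᵢg ≤ Sᵢ for all i}|`. -/
noncomputable def mark [Group G] {n : ℕ} (K S : Fin (n + 1) → Subgroup G) : ℕ :=
  Nat.card {x : G ⧸ S 0 //
    ∃ g : G, QuotientGroup.mk g = x ∧ ∀ i, ∀ k ∈ K i, g⁻¹ * k * g ∈ S i}

/-- The normalizer `N_G(S̄) = ⋂ᵢ N_G(Sᵢ)` of a slice. -/
def sliceNormalizer [Group G] {n : ℕ} (S : Fin (n + 1) → Subgroup G) : Subgroup G :=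
  ⨅ i, Subgroup.normalizer (S i : Set G)

/-- The index `[N_G(S̄) : S₀]`. -/
noncomputable def sliceIndex [Group G] {n : ℕ} (S : Fin (n + 1) → Subgroup G) : ℕ :=
  (S 0).relIndex (sliceNormalizer S)

section Aux

variable [Group G]

open Subgroup

/-- The set of elements witnessing the mark condition. -/
def markSet {n : ℕ} (K S : Fin (n + 1) → Subgroup G) : Set G :=
  {g : G | ∀ i, ∀ k ∈ K i, g⁻¹ * k * g ∈ S i}

/-- Counting lemma: if `A` is closed under right multiplication by `H`, then the number of
cosets meeting `A` times `|H|` equals `|A|`. -/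
lemma card_quot_mul (H : Subgroup G) (A : Set G)
    (hA : ∀ a ∈ A, ∀ h ∈ H, a * h ∈ A) :
    Nat.card {x : G ⧸ H // ∃ g, QuotientGroup.mk g = x ∧ g ∈ A} * Nat.card H = Nat.card A := by
  classical
  have hpre : ((QuotientGroup.mk : G → G ⧸ H) ⁻¹' ((QuotientGroup.mk : G → G ⧸ H) '' A)) = A := by
    ext g
    simp only [Set.mem_preimage, Set.mem_image]
    constructor
    · rintro ⟨a, ha, hag⟩
      have h1 : a⁻¹ * g ∈ H := QuotientGroup.eq.mp hag
      have h2 := hA a ha _ h1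
      simpa using h2
    · exact fun h => ⟨g, h, rfl⟩
  have e1 : {x : G ⧸ H // ∃ g, QuotientGroup.mk g = x ∧ g ∈ A} ≃
      ((QuotientGroup.mk : G → G ⧸ H) '' A) := by
    apply Equiv.subtypeEquivRight
    intro x
    constructor
    · rintro ⟨g, h1, h2⟩; exact ⟨g, h2, h1⟩
    · rintro ⟨g, h2, h1⟩; exact ⟨g, h1, h2⟩
  have e2 := QuotientGroup.preimageMkEquivSubgroupProdSet H ((QuotientGroup.mk : G → G ⧸ H) '' A)
  rw [hpre] at e2
  rw [Nat.card_congr e1, Nat.card_congr e2, Nat.card_prod, mul_comm]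

lemma markSet_mul_mem {n : ℕ} {K S : Fin (n + 1) → Subgroup G}
    {a h : G} (ha : a ∈ markSet K S) (hh : ∀ i, h ∈ Subgroup.normalizer (S i : Set G)) :
    a * h ∈ markSet K S := by
  intro i k hk
  have h1 : a⁻¹ * k * a ∈ S i := ha i k hk
  have h2 : h⁻¹ ∈ Subgroup.normalizer (S i : Set G) := inv_mem (hh i)
  have h3 := (Subgroup.mem_normalizer_iff.mp h2 (a⁻¹ * k * a)).mp h1
  rw [inv_inv] at h3
  have : (a * h)⁻¹ * k * (a * h) = h⁻¹ * (a⁻¹ * k * a) * h := by group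
  rw [this]
  exact h3

lemma mark_mul_card {n : ℕ} (K S : Fin (n + 1) → Subgroup G) (hS : Monotone S) :
    mark K S * Nat.card (S 0) = Nat.card (markSet K S) := by
  apply card_quot_mul
  intro a ha h hh
  intro i k hk
  have h1 : a⁻¹ * k * a ∈ S i := ha i k hk
  have hhi : h ∈ S i := hS (Fin.zero_le i) hh
  have : (a * h)⁻¹ * k * (a * h) = h⁻¹ * (a⁻¹ * k * a) * h := by group
  rw [this]
  exact mul_mem (mul_mem (inv_mem hhi) h1) hhi

lemma le_sliceNormalizer {n : ℕ} {S : Fin (n + 1) → Subgroup G} (hS : Monotone S) :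
    S 0 ≤ sliceNormalizer S :=
  le_iInf fun i => (hS (Fin.zero_le i)).trans (Subgroup.le_normalizer)

lemma card_sliceNormalizer {n : ℕ} [Finite G] {S : Fin (n + 1) → Subgroup G} (hS : Monotone S) :
    Nat.card (sliceNormalizer S) = sliceIndex S * Nat.card (S 0) := by
  have hle : S 0 ≤ sliceNormalizer S := le_sliceNormalizer hS
  have h1 := Subgroup.index_mul_card ((S 0).subgroupOf (sliceNormalizer S))
  have h2 : Nat.card ((S 0).subgroupOf (sliceNormalizer S)) = Nat.card (S 0) :=
    Nat.card_congr (Subgroup.subgroupOfEquivOfLe hle).toEquiv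
  rw [h2] at h1
  exact h1.symm

lemma sliceIndex_ne_zero {n : ℕ} [Finite G] (S : Fin (n + 1) → Subgroup G) :
    sliceIndex S ≠ 0 :=
  Subgroup.index_ne_zero_of_finite

/-- The key divisibility with a description of the quotient. -/
lemma mark_eq_mul {n : ℕ} [Finite G] (K S : Fin (n + 1) → Subgroup G) (hS : Monotone S) :
    ∃ t, mark K S = t * sliceIndex S := by
  classical
  have hA : ∀ a ∈ markSet K S, ∀ h ∈ sliceNormalizer S, a * h ∈ markSet K S := by
    intro a ha h hh
    exact markSet_mul_mem ha fun i => (Subgroup.mem_iInf.mp hh i)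
  have hkey := card_quot_mul (sliceNormalizer S) (markSet K S) hA
  set t := Nat.card {x : G ⧸ sliceNormalizer S //
      ∃ g, QuotientGroup.mk g = x ∧ g ∈ markSet K S} with ht
  refine ⟨t, ?_⟩
  have h1 : mark K S * Nat.card (S 0) = Nat.card (markSet K S) := mark_mul_card K S hS
  have h2 : Nat.card (sliceNormalizer S) = sliceIndex S * Nat.card (S 0) :=
    card_sliceNormalizer hS
  have hc : Nat.card (S 0) ≠ 0 := Nat.card_pos.ne'
  have : mark K S * Nat.card (S 0) = t * sliceIndex S * Nat.card (S 0) := by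
    rw [h1, ← hkey, h2]; ring
  exact Nat.eq_of_mul_eq_mul_right (Nat.pos_of_ne_zero hc) this

lemma sliceIndex_dvd_mark {n : ℕ} [Finite G] (K S : Fin (n + 1) → Subgroup G)
    (hS : Monotone S) : sliceIndex S ∣ mark K S := by
  obtain ⟨t, ht⟩ := mark_eq_mul K S hS
  exact ⟨t, by rw [ht, mul_comm]⟩

lemma markSet_self {n : ℕ} [Finite G] (S : Fin (n + 1) → Subgroup G) :
    markSet S S = (sliceNormalizer S : Set G) := by
  ext g
  constructor
  · intro hg
    refine Subgroup.mem_iInf.mpr fun i => ?_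
    have hmap : (S i).map (MulAut.conj g⁻¹).toMonoidHom ≤ S i := by
      rintro x ⟨s, hs, rfl⟩
      simpa [MulAut.conj_apply, mul_assoc] using hg i s hs
    have hcard : Nat.card (S i) ≤ Nat.card ((S i).map (MulAut.conj g⁻¹).toMonoidHom) :=
      le_of_eq (Nat.card_congr
        (Subgroup.equivMapOfInjective (S i) _ (MulAut.conj g⁻¹).injective).toEquiv)
    have heq : (S i).map (MulAut.conj g⁻¹).toMonoidHom = S i :=
      Subgroup.eq_of_le_of_card_ge hmap hcard
    rw [Subgroup.mem_normalizer_iff]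
    intro h
    constructor
    · intro hh
      have : h ∈ (S i).map (MulAut.conj g⁻¹).toMonoidHom := heq.symm ▸ hh
      obtain ⟨s, hs, hes⟩ := this
      have : h = g⁻¹ * s * g := by simpa [MulAut.conj_apply, mul_assoc] using hes.symm
      rw [this]
      have : g * (g⁻¹ * s * g) * g⁻¹ = s := by group
      rw [this]; exact hs
    · intro hh
      have := hg i _ hh
      have he : g⁻¹ * (g * h * g⁻¹) * g = h := by group
      rwa [he] at this
  · intro hg i k hk
    have h2 : g⁻¹ ∈ Subgroup.normalizer (S i : Set G) := inv_mem (Subgroup.mem_iInf.mp hg i)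
    have h3 := (Subgroup.mem_normalizer_iff.mp h2 k).mp hk
    rwa [inv_inv] at h3

lemma mark_self {n : ℕ} [Finite G] (S : Fin (n + 1) → Subgroup G) (hS : Monotone S) :
    mark S S = sliceIndex S := by
  have h1 : mark S S * Nat.card (S 0) = Nat.card (markSet S S) := mark_mul_card S S hS
  rw [markSet_self, SetLike.coe_sort_coe, card_sliceNormalizer hS] at h1
  have hc : 0 < Nat.card (S 0) := Nat.card_pos
  exact Nat.eq_of_mul_eq_mul_right hc h1

lemma mark_ne_zero_imp {n : ℕ} {K S : Fin (n + 1) → Subgroup G}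
    (h : mark K S ≠ 0) :
    ∃ g : G, ∀ i, (K i).map (MulAut.conj g).toMonoidHom ≤ S i := by
  obtain ⟨⟨x, g, hgx, hg⟩⟩ := (Nat.card_ne_zero.mp h).1
  refine ⟨g⁻¹, fun i => ?_⟩
  rintro y ⟨k, hk, rfl⟩
  simpa [MulAut.conj_apply, mul_assoc] using hg i k hk

end Aux

/-- the vectors `w_{S̄}` with `T̄`-coordinate `m(T̄,S̄)/[N_G(S̄):S₀]`
have integer entries and form a `ℤ`-basis of the full product `∏_{T̄} ℤ`. -/
theorem marks_div_basis {n : ℕ} [Group G] [Finite G]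
    (R : Finset {S : Fin (n + 1) → Subgroup G // Monotone S})
    (hR : ∀ S : {S : Fin (n + 1) → Subgroup G // Monotone S},
      ∃! T, T ∈ R ∧ ∃ g : G, sliceConj g S.1 = T.1) :
    (∀ S T : R, sliceIndex S.1.1 ∣ mark T.1.1 S.1.1) ∧
    ∃ b : Module.Basis R ℤ (R → ℤ), ∀ S T : R,
      b S T = ((mark T.1.1 S.1.1 / sliceIndex S.1.1 : ℕ) : ℤ) := by
  classical
  have hdvd : ∀ S T : R, sliceIndex S.1.1 ∣ mark T.1.1 S.1.1 := fun S T =>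
    sliceIndex_dvd_mark _ _ S.1.2
  refine ⟨hdvd, ?_⟩
  let M : Matrix R R ℤ := fun T S => ((mark T.1.1 S.1.1 / sliceIndex S.1.1 : ℕ) : ℤ)
  let f : R → ℕ := fun S => ∑ i, Nat.card (S.1.1 i)
  have hdiag : ∀ S : R, M S S = 1 := by
    intro S
    have h1 := mark_self S.1.1 S.1.2
    have h2 := sliceIndex_ne_zero S.1.1
    simp only [M, h1, Nat.div_self (Nat.pos_of_ne_zero h2), Nat.cast_one]
  have hmark : ∀ T S : R, M T S ≠ 0 → mark T.1.1 S.1.1 ≠ 0 := by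
    intro T S h hm
    apply h
    simp [M, hm]
  have htri : ∀ T S : R, M T S ≠ 0 → f T ≤ f S ∧ (f T = f S → T = S) := by
    intro T S hM
    obtain ⟨g, hg⟩ := mark_ne_zero_imp (hmark T S hM)
    have hcard : ∀ i, Nat.card (T.1.1 i) ≤ Nat.card (S.1.1 i) := by
      intro i
      calc Nat.card (T.1.1 i)
          = Nat.card ((T.1.1 i).map (MulAut.conj g).toMonoidHom) :=
            Nat.card_congr
              (Subgroup.equivMapOfInjective _ _ (MulAut.conj g).injective).toEquiv
        _ ≤ Nat.card (S.1.1 i) := Subgroup.card_le_of_le (hg i)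
    refine ⟨Finset.sum_le_sum fun i _ => hcard i, fun hf => ?_⟩
    have hceq : ∀ i, Nat.card (T.1.1 i) = Nat.card (S.1.1 i) := by
      by_contra hcon
      push_neg at hcon
      obtain ⟨j, hj⟩ := hcon
      have hlt : f T < f S :=
        Finset.sum_lt_sum (fun i _ => hcard i)
          ⟨j, Finset.mem_univ j, lt_of_le_of_ne (hcard j) hj⟩
      exact absurd hf (ne_of_lt hlt)
    have heq : ∀ i, (T.1.1 i).map (MulAut.conj g).toMonoidHom = S.1.1 i := by
      intro i
      apply Subgroup.eq_of_le_of_card_ge (hg i)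
      rw [← hceq i]
      exact le_of_eq
        (Nat.card_congr (Subgroup.equivMapOfInjective _ _ (MulAut.conj g).injective).toEquiv)
    obtain ⟨U, _, hUuniq⟩ := hR T.1
    have h1 : S.1 = U := hUuniq S.1 ⟨S.2, g, funext heq⟩
    have h2 : T.1 = U := hUuniq T.1 ⟨T.2, 1, by
      funext i
      ext x
      simp [sliceConj, Subgroup.mem_map, MulAut.conj_apply]⟩
    exact Subtype.ext (h2.trans h1.symm)
  let e0 : R ≃ Fin (Fintype.card R) := Fintype.equivFin R
  let σ : Equiv.Perm (Fin (Fintype.card R)) := Tuple.sort (f ∘ e0.symm)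
  let e : Fin (Fintype.card R) ≃ R := σ.trans e0.symm
  have hmono : Monotone ((f ∘ e0.symm) ∘ σ) := Tuple.monotone_sort (f ∘ e0.symm)
  have hblock : (M.submatrix e e).BlockTriangular id := by
    intro i j hij
    by_contra h0
    obtain ⟨hle, heq⟩ := htri (e i) (e j) h0
    have h2 : f (e j) ≤ f (e i) := hmono (le_of_lt hij)
    have h3 : e i = e j := heq (le_antisymm hle h2)
    exact absurd (e.injective h3) (ne_of_gt hij)
  have hdet : M.det = 1 := by
    rw [← Matrix.det_submatrix_equiv_self e M, Matrix.det_of_upperTriangular hblock]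
    exact Finset.prod_eq_one fun i _ => hdiag (e i)
  have hinv : Invertible M := M.invertibleOfIsUnitDet (by rw [hdet]; exact isUnit_one)
  refine ⟨(Pi.basisFun ℤ R).map (M.toLinearEquiv' hinv), fun S T => ?_⟩
  have hb : ((Pi.basisFun ℤ R).map (M.toLinearEquiv' hinv)) S =
      M.mulVec (Pi.single S 1) := by
    rw [Module.Basis.map_apply, Pi.basisFun_apply]
    show Matrix.toLin' M (Pi.single S 1) = _
    rw [Matrix.toLin'_apply]
  rw [hb, Matrix.mulVec_single_one]
  rfl
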